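/- arXiv:1402.6424 — 8 statements merged into one kernel-verified Lean document; each statement's English description precedes it below -/
import Mathlib

section
/- Let E and F be Hilbert C*-modules over C*-algebras A and B respectively, let φ : A → B be a linear map, and let T : E → F be a map satisfying ⟨Tx, Ty⟩ = φ(⟨x, y⟩) for all x, y ∈ E. Then T is linear. -/
open scoped RightActions ComplexOrder

/-- The class `CStarModule` as it stood in Mathlib of December 2024 (right `Aᵐᵒᵖ`-action,
`⟪x, y <• a⟫ = ⟪x, y⟫ * a`); current Mathlib's `CStarModule` uses a left action instead. -/
class CStarModuleRightAct (A E : Type*) [NonUnitalSemiring A] [StarRing A]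
    [Module ℂ A] [AddCommGroup E] [Module ℂ E] [PartialOrder A] [SMul Aᵐᵒᵖ E] [Norm A] [Norm E]
    extends Inner A E where
  inner_add_right {x} {y} {z} : inner x (y + z) = inner x y + inner x z
  inner_self_nonneg {x} : 0 ≤ inner x x
  inner_self {x} : inner x x = 0 ↔ x = 0
  inner_op_smul_right {a : A} {x y : E} : inner x (y <• a) = inner x y * a
  inner_smul_right_complex {z : ℂ} {x} {y} : inner x (z • y) = z • inner x y
  star_inner x y : star (inner x y) = inner y x
  norm_eq_sqrt_norm_inner_self x : ‖x‖ = √‖inner x x‖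

section
variable {A E : Type*} [NonUnitalCStarAlgebra A] [PartialOrder A] [StarOrderedRing A]
  [AddCommGroup E] [Module ℂ E] [SMul Aᵐᵒᵖ E] [Norm E] [CStarModuleRightAct A E]

lemma CSMRA_inner_add_left {x y z : E} : inner A (x + y) z = inner A x z + inner A y z := by
  rw [← CStarModuleRightAct.star_inner z, CStarModuleRightAct.inner_add_right, star_add,
    CStarModuleRightAct.star_inner, CStarModuleRightAct.star_inner]

lemma CSMRA_inner_zero_right {x : E} : inner A x (0 : E) = 0 := by
  have h : inner A x (0 : E) = inner A x 0 + inner A x 0 := by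
    rw [← CStarModuleRightAct.inner_add_right, add_zero]
  simpa using h.symm

lemma CSMRA_inner_neg_right {x y : E} : inner A x (-y) = - inner A x y := by
  apply eq_neg_of_add_eq_zero_left
  rw [← CStarModuleRightAct.inner_add_right, neg_add_cancel, CSMRA_inner_zero_right]

lemma CSMRA_inner_sub_right {x y z : E} : inner A x (y - z) = inner A x y - inner A x z := by
  rw [sub_eq_add_neg, CStarModuleRightAct.inner_add_right, CSMRA_inner_neg_right,
    ← sub_eq_add_neg]

lemma CSMRA_inner_sub_left {x y z : E} : inner A (x - y) z = inner A x z - inner A y z := by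
  rw [← CStarModuleRightAct.star_inner z, CSMRA_inner_sub_right, star_sub,
    CStarModuleRightAct.star_inner, CStarModuleRightAct.star_inner]

lemma CSMRA_inner_smul_left_complex {z : ℂ} {x y : E} :
    inner A (z • x) y = star z • inner A x y := by
  rw [← CStarModuleRightAct.star_inner y, CStarModuleRightAct.inner_smul_right_complex,
    star_smul, CStarModuleRightAct.star_inner]

end

/-- If `φ` is linear, every map `T` between Hilbert C*-modules preserving the inner products
with respect to `φ` is linear. -/
theorem inner_preserving_map_linear
    {A B E F : Type*}
    [NonUnitalCStarAlgebra A] [PartialOrder A] [StarOrderedRing A]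
    [NonUnitalCStarAlgebra B] [PartialOrder B] [StarOrderedRing B]
    [AddCommGroup E] [Module ℂ E] [SMul Aᵐᵒᵖ E] [Norm E] [CStarModuleRightAct A E]
    [AddCommGroup F] [Module ℂ F] [SMul Bᵐᵒᵖ F] [Norm F] [CStarModuleRightAct B F]
    (φ : A →ₗ[ℂ] B) (T : E → F)
    (hT : ∀ x y : E, (inner B (T x) (T y) : B) = φ (inner A x y)) :
    ∀ (α : ℂ) (x y : E), T (α • x + y) = α • T x + T y := by
  intro α x y
  set d := T (α • x + y) - (α • T x + T y) with hd
  have key : (inner B d d : B) = 0 := by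
    simp only [hd, CSMRA_inner_sub_left, CSMRA_inner_sub_right,
      CSMRA_inner_add_left, CStarModuleRightAct.inner_add_right,
      CSMRA_inner_smul_left_complex, CStarModuleRightAct.inner_smul_right_complex, hT,
      map_add, map_smul]
    module
  have hn : ‖d‖ = 0 := by
    rw [CStarModuleRightAct.norm_eq_sqrt_norm_inner_self (A := B), key]
    simp
  have : d = 0 := CStarModuleRightAct.inner_self.mp key
  rw [hd, sub_eq_zero] at this
  exact this
end

section
/- Let E and F be Hilbert C*-modules over C*-algebras A and B, with F full. Let T : E → F be a surjective linear map and φ : A → B a map such that ⟨Tx, Ty⟩ = φ(⟨x, y⟩) and T(xa) = T(x)φ(a) for all x, y ∈ E and a ∈ A. Then φ is additive and multiplicative: φ(αa₁ + a₂) = αφ(a₁) + φ(a₂) and φ(a₁a₂) = φ(a₁)φ(a₂) for all a₁, a₂ ∈ A and scalars α. -/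
open scoped RightActions ComplexOrder

/-- The Hilbert C⋆-module class as it stood in Mathlib of December 2024 (right `A`-module
structure via `SMul Aᵐᵒᵖ E`, inner product `A`-linear on the right in the second variable).
Mathlib's current `CStarModule` uses a left action instead, so the old class is restated here. -/
class CStarModuleRight (A E : Type*) [NonUnitalSemiring A] [StarRing A] [Module ℂ A]
    [AddCommGroup E] [Module ℂ E] [PartialOrder A] [SMul Aᵐᵒᵖ E] [Norm A] [Norm E]
    extends Inner A E where
  inner_add_right {x} {y} {z} : inner x (y + z) = inner x y + inner x z
  inner_self_nonneg {x} : 0 ≤ inner x x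
  inner_self {x} : inner x x = 0 ↔ x = 0
  inner_op_smul_right {a : A} {x y : E} : inner x (y <• a) = inner x y * a
  inner_smul_right_complex {z : ℂ} {x} {y} : inner x (z • y) = z • inner x y
  star_inner x y : star (inner x y) = inner y x
  norm_eq_sqrt_norm_inner_self x : ‖x‖ = √‖inner x x‖

private lemma ext_inner_aux {A E : Type*} [NonUnitalCStarAlgebra A] [PartialOrder A]
    [AddCommGroup E] [Module ℂ E] [SMul Aᵐᵒᵖ E] [Norm E] [CStarModuleRight A E]
    {x y : E} (h : ∀ z : E, inner A z x = inner A z y) : x = y := by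
  rw [← sub_eq_zero, ← CStarModuleRight.inner_self (A := A) (x := x - y)]
  have hs : ∀ u v w : E, inner A u (v - w) = inner A u v - inner A u w := by
    intro u v w
    have := CStarModuleRight.inner_add_right (A := A) (x := u) (y := v - w) (z := w)
    rw [sub_add_cancel] at this
    rw [this, add_sub_cancel_right]
  rw [hs, h (x - y), sub_self]

/-- If a surjective linear map `T` between Hilbert C*-modules preserves inner products and is a
module map with respect to `φ`, and `F` is full, then `φ` is additive and multiplicative. -/
theorem phi_additive_multiplicative
    {A B E F : Type*}
    [NonUnitalCStarAlgebra A] [PartialOrder A] [StarOrderedRing A]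
    [NonUnitalCStarAlgebra B] [PartialOrder B] [StarOrderedRing B]
    [AddCommGroup E] [Module ℂ E] [SMul Aᵐᵒᵖ E] [Norm E] [CStarModuleRight A E]
    [AddCommGroup F] [Module ℂ F] [SMul Bᵐᵒᵖ F] [Norm F] [CStarModuleRight B F]
    (T : E →ₗ[ℂ] F) (hsurj : Function.Surjective T) (φ : A → B)
    (hfull : (Submodule.span ℂ
      {b : B | ∃ y₁ y₂ : F, (inner B y₁ y₂ : B) = b}).topologicalClosure = ⊤)
    (hip : ∀ x y : E, (inner B (T x) (T y) : B) = φ (inner A x y))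
    (hmod : ∀ (x : E) (a : A), T (x <• a) = T x <• φ a) :
    ∀ (α : ℂ) (a₁ a₂ : A),
      φ (α • a₁ + a₂) = α • φ a₁ + φ a₂ ∧ φ (a₁ * a₂) = φ a₁ * φ a₂ := by
  -- key cancellation: if ⟪y₁, y₂⟫ * d = 0 for all y₁ y₂ then d = 0
  have key : ∀ d : B, (∀ y₁ y₂ : F, (inner B y₁ y₂ : B) * d = 0) → d = 0 := by
    intro d hd
    have hK : ∀ b : B, b * d = 0 := by
      intro b
      let K : Submodule ℂ B :=
        { carrier := {b : B | b * d = 0}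
          add_mem' := fun h₁ h₂ => by simp_all [add_mul]
          zero_mem' := by simp
          smul_mem' := fun c x hx => by simp_all [smul_mul_assoc] }
      have hKclosed : IsClosed (K : Set B) :=
        isClosed_singleton.preimage (continuous_id.mul continuous_const)
      have hspan : Submodule.span ℂ {b : B | ∃ y₁ y₂ : F, (inner B y₁ y₂ : B) = b} ≤ K := by
        refine Submodule.span_le.mpr ?_
        rintro b ⟨y₁, y₂, rfl⟩
        exact hd y₁ y₂
      have := Submodule.topologicalClosure_minimal _ hspan hKclosed
      rw [hfull] at this
      exact this Submodule.mem_top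
    have := hK (star d)
    exact (CStarRing.star_mul_self_eq_zero_iff d).mp this
  -- smul in E/F distributes (proved via inner products)
  intro α a₁ a₂
  constructor
  · -- additivity
    have hdistE : ∀ x : E, x <• (α • a₁ + a₂) = α • (x <• a₁) + x <• a₂ := by
      intro x
      refine ext_inner_aux (A := A) fun z => ?_
      simp only [CStarModuleRight.inner_op_smul_right, CStarModuleRight.inner_add_right,
        CStarModuleRight.inner_smul_right_complex]
      rw [mul_add, mul_smul_comm]
    have heq : ∀ x : E, T x <• φ (α • a₁ + a₂) = T x <• (α • φ a₁ + φ a₂) := by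
      intro x
      have h1 : T (x <• (α • a₁ + a₂)) = T x <• φ (α • a₁ + a₂) := hmod _ _
      rw [hdistE x] at h1
      have h2 : T (α • (x <• a₁) + x <• a₂) = α • (T x <• φ a₁) + T x <• φ a₂ := by
        rw [map_add, map_smul, hmod, hmod]
      rw [h2] at h1
      rw [← h1]
      refine ext_inner_aux (A := B) fun z => ?_
      simp only [CStarModuleRight.inner_op_smul_right, CStarModuleRight.inner_add_right,
        CStarModuleRight.inner_smul_right_complex]
      rw [mul_add, mul_smul_comm]
    rw [← sub_eq_zero]
    refine key _ fun y₁ y₂ => ?_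
    obtain ⟨x, rfl⟩ := hsurj y₂
    have := heq x
    have h3 : (inner B y₁ (T x <• φ (α • a₁ + a₂)) : B)
        = inner B y₁ (T x <• (α • φ a₁ + φ a₂)) := by rw [this]
    simp only [CStarModuleRight.inner_op_smul_right] at h3
    rw [mul_sub, h3, sub_self]
  · -- multiplicativity
    have hdistE : ∀ x : E, x <• (a₁ * a₂) = (x <• a₁) <• a₂ := by
      intro x
      refine ext_inner_aux (A := A) fun z => ?_
      simp only [CStarModuleRight.inner_op_smul_right]
      rw [mul_assoc]
    have heq : ∀ x : E, T x <• φ (a₁ * a₂) = T x <• (φ a₁ * φ a₂) := by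
      intro x
      have h1 : T (x <• (a₁ * a₂)) = T x <• φ (a₁ * a₂) := hmod _ _
      rw [hdistE x] at h1
      rw [hmod, hmod] at h1
      rw [← h1]
      refine ext_inner_aux (A := B) fun z => ?_
      simp only [CStarModuleRight.inner_op_smul_right]
      rw [mul_assoc]
    rw [← sub_eq_zero]
    refine key _ fun y₁ y₂ => ?_
    obtain ⟨x, rfl⟩ := hsurj y₂
    have h3 : (inner B y₁ (T x <• φ (a₁ * a₂)) : B)
        = inner B y₁ (T x <• (φ a₁ * φ a₂)) := by rw [heq x]
    simp only [CStarModuleRight.inner_op_smul_right] at h3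
    rw [mul_sub, h3, sub_self]
end

section
/- Let E and F be Hilbert C*-modules over C*-algebras A and B, with F full. Let T : E → F be a surjective linear map and φ : A → B a map such that ⟨Tx, Ty⟩ = φ(⟨x, y⟩) and T(xa) = T(x)φ(a) for all x, y ∈ E and a ∈ A. Then φ is a *-homomorphism; in particular φ(a*) = φ(a)* for all a ∈ A. -/
open scoped RightActions ComplexOrder

/-- The Hilbert C⋆-module class as it stood in the older Mathlib (right modules, acting through
`Aᵐᵒᵖ`); Mathlib's `CStarModule` is now a left-module class. -/
class RightCStarModule (A E : Type*) [NonUnitalSemiring A] [StarRing A]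
    [Module ℂ A] [AddCommGroup E] [Module ℂ E] [PartialOrder A] [SMul Aᵐᵒᵖ E] [Norm A] [Norm E]
    extends Inner A E where
  inner_add_right {x} {y} {z} : inner x (y + z) = inner x y + inner x z
  inner_self_nonneg {x} : 0 ≤ inner x x
  inner_self {x} : inner x x = 0 ↔ x = 0
  inner_op_smul_right {a : A} {x y : E} : inner x (y <• a) = inner x y * a
  inner_smul_right_complex {z : ℂ} {x} {y} : inner x (z • y) = z • inner x y
  star_inner x y : star (inner x y) = inner y x
  norm_eq_sqrt_norm_inner_self x : ‖x‖ = √‖inner x x‖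

theorem RightCStarModule.inner_op_smul_left {A E : Type*} [NonUnitalCStarAlgebra A]
    [PartialOrder A] [AddCommGroup E] [Module ℂ E] [SMul Aᵐᵒᵖ E] [Norm E] [RightCStarModule A E]
    {a : A} {x y : E} : inner A (x <• a) y = star a * inner A x y := by
  rw [← RightCStarModule.star_inner y (x <• a), RightCStarModule.inner_op_smul_right, star_mul,
    RightCStarModule.star_inner]

/-- If a surjective linear map `T` between Hilbert C*-modules preserves inner products and is a
module map with respect to `φ`, and `F` is full, then `φ` is a *-homomorphism; in particular
`φ (star a) = star (φ a)`. -/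
theorem phi_star_hom
    {A B E F : Type*}
    [NonUnitalCStarAlgebra A] [PartialOrder A] [StarOrderedRing A]
    [NonUnitalCStarAlgebra B] [PartialOrder B] [StarOrderedRing B]
    [AddCommGroup E] [Module ℂ E] [SMul Aᵐᵒᵖ E] [Norm E] [RightCStarModule A E]
    [AddCommGroup F] [Module ℂ F] [SMul Bᵐᵒᵖ F] [Norm F] [RightCStarModule B F]
    (T : E →ₗ[ℂ] F) (hsurj : Function.Surjective T) (φ : A → B)
    (hfull : (Submodule.span ℂ
      {b : B | ∃ y₁ y₂ : F, (inner B y₁ y₂ : B) = b}).topologicalClosure = ⊤)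
    (hip : ∀ x y : E, (inner B (T x) (T y) : B) = φ (inner A x y))
    (hmod : ∀ (x : E) (a : A), T (x <• a) = T x <• φ a) :
    (∀ (α : ℂ) (a₁ a₂ : A), φ (α • a₁ + a₂) = α • φ a₁ + φ a₂) ∧
    (∀ a₁ a₂ : A, φ (a₁ * a₂) = φ a₁ * φ a₂) ∧
    (∀ a : A, φ (star a) = star (φ a)) := by
  -- Key identity (R): left multiplication by an inner product.
  have hR : ∀ (x₁ x₂ : E) (a : A),
      (inner B (T x₁) (T x₂) : B) * φ a = φ ((inner A x₁ x₂ : A) * a) := by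
    intro x₁ x₂ a
    rw [← RightCStarModule.inner_op_smul_right, ← hmod, hip, RightCStarModule.inner_op_smul_right]
  -- `φ` intertwines `star` on inner products.
  have hstar : ∀ x y : E, star (φ (inner A x y : A)) = φ (inner A y x : A) := by
    intro x y
    rw [← hip, ← hip, RightCStarModule.star_inner]
  -- Density lemma (left): if all inner products annihilate `d` on the left then `d = 0`.
  have hzeroL : ∀ d : B, (∀ y₁ y₂ : F, (inner B y₁ y₂ : B) * d = 0) → d = 0 := by
    intro d hd
    have hK : IsClosed {b : B | b * d = 0} :=
      isClosed_eq (continuous_id.mul continuous_const) continuous_const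
    let K : Submodule ℂ B :=
      { carrier := {b : B | b * d = 0}
        add_mem' := fun {a b} ha hb => by
          simp only [Set.mem_setOf_eq] at *
          rw [add_mul, ha, hb, add_zero]
        zero_mem' := by simp
        smul_mem' := fun c {x} hx => by
          simp only [Set.mem_setOf_eq] at *
          rw [smul_mul_assoc, hx, smul_zero] }
    have hle : (Submodule.span ℂ
        {b : B | ∃ y₁ y₂ : F, (inner B y₁ y₂ : B) = b}).topologicalClosure ≤ K := by
      refine Submodule.topologicalClosure_minimal _ ?_ hK
      refine Submodule.span_le.2 ?_
      rintro b ⟨y₁, y₂, rfl⟩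
      exact hd y₁ y₂
    rw [hfull] at hle
    have hsd : star d * d = 0 := hle Submodule.mem_top
    exact (CStarRing.star_mul_self_eq_zero_iff d).mp hsd
  -- Density lemma (right).
  have hzeroR : ∀ d : B, (∀ y₁ y₂ : F, d * (inner B y₁ y₂ : B) = 0) → d = 0 := by
    intro d hd
    have hK : IsClosed {b : B | d * b = 0} :=
      isClosed_eq (continuous_const.mul continuous_id) continuous_const
    let K : Submodule ℂ B :=
      { carrier := {b : B | d * b = 0}
        add_mem' := fun {a b} ha hb => by
          simp only [Set.mem_setOf_eq] at *
          rw [mul_add, ha, hb, add_zero]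
        zero_mem' := by simp
        smul_mem' := fun c {x} hx => by
          simp only [Set.mem_setOf_eq] at *
          rw [mul_smul_comm, hx, smul_zero] }
    have hle : (Submodule.span ℂ
        {b : B | ∃ y₁ y₂ : F, (inner B y₁ y₂ : B) = b}).topologicalClosure ≤ K := by
      refine Submodule.topologicalClosure_minimal _ ?_ hK
      refine Submodule.span_le.2 ?_
      rintro b ⟨y₁, y₂, rfl⟩
      exact hd y₁ y₂
    rw [hfull] at hle
    have hsd : d * star d = 0 := hle Submodule.mem_top
    exact (CStarRing.mul_star_self_eq_zero_iff d).mp hsd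
  -- Key identity (L'): right multiplication of `φ` of an inner product by an inner product.
  have hL' : ∀ (u v t₁ t₂ : E),
      φ (inner A u v : A) * (inner B (T t₁) (T t₂) : B)
        = φ ((inner A u v : A) * inner A t₁ t₂) := by
    intro u v t₁ t₂
    have h1 : φ (inner A u v : A) * (inner B (T t₁) (T t₂) : B)
        = star ((inner B (T t₂) (T t₁) : B) * φ (inner A v u : A)) := by
      rw [star_mul, hstar, RightCStarModule.star_inner]
    rw [h1, hR]
    have h2 : (inner A t₂ t₁ : A) * inner A v u = inner A t₂ (t₁ <• (inner A v u : A)) :=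
      (RightCStarModule.inner_op_smul_right).symm
    rw [h2, hstar, RightCStarModule.inner_op_smul_left, RightCStarModule.star_inner]
  refine ⟨?_, ?_, ?_⟩
  · -- ℂ-linearity
    intro α a₁ a₂
    have key : ∀ y₁ y₂ : F,
        (inner B y₁ y₂ : B) * (φ (α • a₁ + a₂) - (α • φ a₁ + φ a₂)) = 0 := by
      intro y₁ y₂
      obtain ⟨x₁, rfl⟩ := hsurj y₁
      obtain ⟨x₂, rfl⟩ := hsurj y₂
      rw [mul_sub, sub_eq_zero]
      calc (inner B (T x₁) (T x₂) : B) * φ (α • a₁ + a₂)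
          = φ ((inner A x₁ x₂ : A) * (α • a₁ + a₂)) := hR x₁ x₂ _
        _ = φ (inner A x₁ (α • (x₂ <• a₁) + x₂ <• a₂) : A) := by
            congr 1
            simp [RightCStarModule.inner_add_right, RightCStarModule.inner_smul_right_complex,
              RightCStarModule.inner_op_smul_right, mul_add, mul_smul_comm]
        _ = (inner B (T x₁) (T (α • (x₂ <• a₁) + x₂ <• a₂)) : B) := (hip _ _).symm
        _ = α • (inner B (T x₁) (T (x₂ <• a₁)) : B) + inner B (T x₁) (T (x₂ <• a₂)) := by
            rw [map_add, map_smul, RightCStarModule.inner_add_right,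
              RightCStarModule.inner_smul_right_complex]
        _ = α • φ ((inner A x₁ x₂ : A) * a₁) + φ ((inner A x₁ x₂ : A) * a₂) := by
            rw [hip, hip, RightCStarModule.inner_op_smul_right, RightCStarModule.inner_op_smul_right]
        _ = α • ((inner B (T x₁) (T x₂) : B) * φ a₁) + (inner B (T x₁) (T x₂) : B) * φ a₂ := by
            rw [hR, hR]
        _ = (inner B (T x₁) (T x₂) : B) * (α • φ a₁ + φ a₂) := by
            rw [mul_add, mul_smul_comm]
    have := hzeroL _ key
    exact sub_eq_zero.mp this
  · -- multiplicativity
    intro a₁ a₂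
    have key : ∀ y₁ y₂ : F,
        (inner B y₁ y₂ : B) * (φ (a₁ * a₂) - φ a₁ * φ a₂) = 0 := by
      intro y₁ y₂
      obtain ⟨x₁, rfl⟩ := hsurj y₁
      obtain ⟨x₂, rfl⟩ := hsurj y₂
      rw [mul_sub, sub_eq_zero]
      calc (inner B (T x₁) (T x₂) : B) * φ (a₁ * a₂)
          = φ ((inner A x₁ x₂ : A) * a₁ * a₂) := by rw [hR, mul_assoc]
        _ = φ ((inner A x₁ (x₂ <• a₁) : A) * a₂) := by
            rw [RightCStarModule.inner_op_smul_right]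
        _ = (inner B (T x₁) (T (x₂ <• a₁)) : B) * φ a₂ := (hR _ _ _).symm
        _ = φ ((inner A x₁ x₂ : A) * a₁) * φ a₂ := by
            rw [hip, RightCStarModule.inner_op_smul_right]
        _ = (inner B (T x₁) (T x₂) : B) * φ a₁ * φ a₂ := by rw [hR]
        _ = (inner B (T x₁) (T x₂) : B) * (φ a₁ * φ a₂) := by rw [mul_assoc]
    have := hzeroL _ key
    exact sub_eq_zero.mp this
  · -- star preservation
    intro a
    set d := φ (star a) - star (φ a) with hd
    -- every left generator multiple of `d` is annihilated by all right generators
    have keyL : ∀ x₁ x₂ : E, (inner B (T x₁) (T x₂) : B) * d = 0 := by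
      intro x₁ x₂
      apply hzeroR
      intro z₁ z₂
      obtain ⟨t₁, rfl⟩ := hsurj z₁
      obtain ⟨t₂, rfl⟩ := hsurj z₂
      rw [hd, mul_sub, sub_mul, sub_eq_zero]
      have hi : (inner B (T x₁) (T x₂) : B) * φ (star a) * inner B (T t₁) (T t₂)
          = φ ((inner A x₁ x₂ : A) * star a * inner A t₁ t₂) := by
        rw [hR, ← RightCStarModule.inner_op_smul_right, hL', RightCStarModule.inner_op_smul_right]
      have hii : (inner B (T x₁) (T x₂) : B) * star (φ a) * inner B (T t₁) (T t₂)
          = φ ((inner A x₁ x₂ : A) * star a * inner A t₁ t₂) := by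
        have h3 : star (φ a) * (inner B (T t₁) (T t₂) : B)
            = φ (star a * (inner A t₁ t₂ : A)) := by
          have h4 : star (φ a) * (inner B (T t₁) (T t₂) : B)
              = star ((inner B (T t₂) (T t₁) : B) * φ a) := by
            rw [star_mul, RightCStarModule.star_inner]
          rw [h4, hR, ← RightCStarModule.inner_op_smul_right, hstar,
            RightCStarModule.inner_op_smul_left]
        rw [mul_assoc, h3, hR, ← mul_assoc]
      rw [hi, hii]
    have : d = 0 := by
      apply hzeroL
      intro y₁ y₂
      obtain ⟨x₁, rfl⟩ := hsurj y₁
      obtain ⟨x₂, rfl⟩ := hsurj y₂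
      exact keyL x₁ x₂
    exact sub_eq_zero.mp this
end

section
/- Let E and F be Hilbert C*-modules over C*-algebras A and B, T : E → F a surjective linear isometry, and φ : A → B a *-isomorphism such that T(xa) = T(x)φ(a) for all x ∈ E, a ∈ A. Then T preserves the inner products with respect to φ: ⟨Tx, Ty⟩ = φ(⟨x, y⟩) for all x, y ∈ E. -/
open scoped RightActions ComplexOrder NNReal

namespace RightCStarModule

variable {A E : Type*} [NonUnitalCStarAlgebra A] [PartialOrder A]
  [AddCommGroup E] [Module ℂ E] [SMul Aᵐᵒᵖ E] [Norm E] [RightCStarModule A E]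

lemma inner_add_left {x y z : E} : inner A (x + y) z = inner A x z + inner A y z := by
  rw [← star_inner (A := A), inner_add_right, star_add, star_inner, star_inner]

lemma inner_op_smul_left_s4 {a : A} {x y : E} : inner A (x <• a) y = star a * inner A x y := by
  rw [← star_inner (A := A), inner_op_smul_right, star_mul, star_inner]

lemma inner_smul_left_complex {z : ℂ} {x y : E} :
    inner A (z • x) y = star z • inner A x y := by
  rw [← star_inner (A := A), inner_smul_right_complex, star_smul, star_inner]

lemma norm_sq_eq {x : E} : ‖x‖ ^ 2 = ‖inner A x x‖ := by
  rw [norm_eq_sqrt_norm_inner_self (A := A) x, Real.sq_sqrt (norm_nonneg _)]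

end RightCStarModule

namespace ModuleMapIsometryAux

section Helpers
variable {B : Type*} [NonUnitalCStarAlgebra B] [PartialOrder B] [StarOrderedRing B]

lemma exists_inr_eq_mul_inr (d : Unitization ℂ B) (p : B) :
    ∃ w : B, (w : Unitization ℂ B) = d * (p : Unitization ℂ B) := by
  refine ⟨d.fst • p + d.snd * p, ?_⟩
  conv_rhs => rw [← Unitization.inl_fst_add_inr_snd_eq d]
  rw [add_mul, Unitization.inl_mul_inr, ← Unitization.inr_mul, ← Unitization.inr_add]

lemma exists_inr_eq_inr_mul (p : B) (d : Unitization ℂ B) :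
    ∃ w : B, (w : Unitization ℂ B) = (p : Unitization ℂ B) * d := by
  refine ⟨d.fst • p + p * d.snd, ?_⟩
  conv_rhs => rw [← Unitization.inl_fst_add_inr_snd_eq d]
  rw [mul_add, Unitization.inr_mul_inl, ← Unitization.inr_mul, ← Unitization.inr_add]

lemma exists_inr_eq_conj (d : Unitization ℂ B) (p : B) :
    ∃ w : B, (w : Unitization ℂ B) = star d * (p : Unitization ℂ B) * d := by
  obtain ⟨u, hu⟩ := exists_inr_eq_mul_inr (star d) p
  obtain ⟨w, hw⟩ := exists_inr_eq_inr_mul u d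
  exact ⟨w, by rw [hw, hu, mul_assoc]⟩
end Helpers

section AUB
variable {C : Type*} [CStarAlgebra C] [PartialOrder C] [StarOrderedRing C]


lemma spec_le_norm {c : C} (hc : IsSelfAdjoint c) {t : ℝ} (ht : t ∈ spectrum ℝ c) : t ≤ ‖c‖ :=
  (le_algebraMap_iff_spectrum_le hc).mp hc.le_algebraMap_norm_self t ht

lemma mul_self_le_norm_smul {c : C} (hc : 0 ≤ c) : c * c ≤ ‖c‖ • c := by
  conv_lhs => rw [← cfc_id ℝ c (IsSelfAdjoint.of_nonneg hc)]
  rw [← cfc_mul _ _ c]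
  have h2 : ‖c‖ • c = cfc (fun t : ℝ => ‖c‖ • (id t : ℝ)) c := by
    rw [cfc_smul _ _ c, cfc_id ℝ c (IsSelfAdjoint.of_nonneg hc)]
  rw [h2]
  refine cfc_mono fun t ht => ?_
  have h0 : 0 ≤ t := spectrum_nonneg_of_nonneg hc ht
  have h1 : t ≤ ‖c‖ := spec_le_norm (IsSelfAdjoint.of_nonneg hc) ht
  simpa [smul_eq_mul] using mul_le_mul_of_nonneg_right h1 h0

lemma approx_unit_bound {c s : C} (hc : 0 ≤ c) (hcs : c ≤ s) {δ : ℝ} (hδ : 0 < δ) :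
    ‖c - cfc (fun t : ℝ => min (t / δ) 1) s * c * cfc (fun t : ℝ => min (t / δ) 1) s‖
      ≤ 2 * Real.sqrt (‖s‖ * δ) := by
  have hs : 0 ≤ s := hc.trans hcs
  have hssa : IsSelfAdjoint s := .of_nonneg hs
  have hcsa : IsSelfAdjoint c := .of_nonneg hc
  set g : ℝ → ℝ := fun t => min (t / δ) 1 with hg
  have hgc : Continuous g := by fun_prop
  set e : C := cfc g s with he
  have hgbd : ∀ t ∈ spectrum ℝ s, 0 ≤ g t ∧ g t ≤ 1 := by
    intro t ht
    have h0 : 0 ≤ t := spectrum_nonneg_of_nonneg hs ht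
    exact ⟨le_min (by positivity) one_pos.le, min_le_right _ _⟩
  have hu' : (1 : C) - e = cfc (fun t : ℝ => 1 - g t) s := by
    rw [he, cfc_sub _ _ s (by fun_prop) (by fun_prop), cfc_const 1 s, map_one]
  have husa : IsSelfAdjoint ((1 : C) - e) := by rw [hu']; exact cfc_predicate _ s
  have he0 : 0 ≤ e := by rw [he]; exact cfc_nonneg fun t ht => (hgbd t ht).1
  have he1 : ‖e‖ ≤ 1 := by
    rw [he]
    refine norm_cfc_le one_pos.le fun t ht => ?_
    rw [Real.norm_of_nonneg (hgbd t ht).1]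
    exact (hgbd t ht).2
  -- ‖(1-e) * s * (1-e)‖ ≤ δ
  have husu : (1 - e) * s * (1 - e) = cfc (fun t : ℝ => (1 - g t) * (t * (1 - g t))) s := by
    rw [cfc_mul _ _ s (by fun_prop) (by fun_prop), cfc_mul _ _ s (by fun_prop) (by fun_prop),
      cfc_id' ℝ s hssa, ← hu', mul_assoc]
  have hnorm1 : ‖(1 - e) * s * (1 - e)‖ ≤ δ := by
    rw [husu]
    refine norm_cfc_le hδ.le fun t ht => ?_
    have h0 : 0 ≤ t := spectrum_nonneg_of_nonneg hs ht
    obtain ⟨hg0, hg1⟩ := hgbd t ht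
    have h1g0 : 0 ≤ 1 - g t := by linarith
    rw [Real.norm_of_nonneg (by positivity)]
    rcases le_or_gt t δ with h | h
    · have h1 : (1 - g t) * (1 - g t) ≤ 1 := by nlinarith
      calc (1 - g t) * (t * (1 - g t)) = t * ((1 - g t) * (1 - g t)) := by ring
        _ ≤ t * 1 := by nlinarith
        _ ≤ δ := by linarith
    · have hgt1 : g t = 1 := min_eq_right (by rw [le_div_iff₀ hδ]; linarith)
      simp [hgt1]
      exact hδ.le
  have hnorm2 : ‖(1 - e) * c * (1 - e)‖ ≤ δ := by
    have h1 : (1 - e) * c * (1 - e) ≤ (1 - e) * s * (1 - e) := by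
      have := star_left_conjugate_le_conjugate hcs (1 - e)
      rwa [husa.star_eq] at this
    have h2 : 0 ≤ (1 - e) * c * (1 - e) := by
      have := star_left_conjugate_nonneg hc (1 - e)
      rwa [husa.star_eq] at this
    exact (CStarAlgebra.norm_le_norm_of_nonneg_of_le h2 h1).trans hnorm1
  -- ‖c * (1-e)‖ ^ 2 ≤ ‖c‖ * δ
  have hcu : ‖c * (1 - e)‖ ^ 2 ≤ ‖c‖ * δ := by
    have h1 : ‖c * (1 - e)‖ ^ 2 = ‖(1 - e) * (c * c) * (1 - e)‖ := by
      rw [sq, ← CStarRing.norm_star_mul_self]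
      congr 1
      rw [star_mul, husa.star_eq, hcsa.star_eq]
      noncomm_ring
    have h2 : (1 - e) * (c * c) * (1 - e) ≤ ‖c‖ • ((1 - e) * c * (1 - e)) := by
      have := star_left_conjugate_le_conjugate (mul_self_le_norm_smul hc) (1 - e)
      rw [husa.star_eq] at this
      calc (1 - e) * (c * c) * (1 - e) ≤ (1 - e) * (‖c‖ • c) * (1 - e) := this
        _ = ‖c‖ • ((1 - e) * c * (1 - e)) := by rw [mul_smul_comm, smul_mul_assoc]
    have h3 : 0 ≤ (1 - e) * (c * c) * (1 - e) := by
      have hcc : 0 ≤ c * c := by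
        have := star_mul_self_nonneg c
        rwa [hcsa.star_eq] at this
      have := star_left_conjugate_nonneg hcc (1 - e)
      rwa [husa.star_eq] at this
    calc ‖c * (1 - e)‖ ^ 2 = ‖(1 - e) * (c * c) * (1 - e)‖ := h1
      _ ≤ ‖‖c‖ • ((1 - e) * c * (1 - e))‖ := CStarAlgebra.norm_le_norm_of_nonneg_of_le h3 h2
      _ = ‖c‖ * ‖(1 - e) * c * (1 - e)‖ := by rw [norm_smul, Real.norm_of_nonneg (norm_nonneg c)]
      _ ≤ ‖c‖ * δ := mul_le_mul_of_nonneg_left hnorm2 (norm_nonneg c)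
  have hcu' : ‖c * (1 - e)‖ ≤ Real.sqrt (‖s‖ * δ) := by
    have hcns : ‖c‖ ≤ ‖s‖ := CStarAlgebra.norm_le_norm_of_nonneg_of_le hc hcs
    have h4 : ‖c * (1 - e)‖ ^ 2 ≤ ‖s‖ * δ := hcu.trans (by gcongr)
    calc ‖c * (1 - e)‖ = Real.sqrt (‖c * (1 - e)‖ ^ 2) := (Real.sqrt_sq (norm_nonneg _)).symm
      _ ≤ Real.sqrt (‖s‖ * δ) := Real.sqrt_le_sqrt h4
  have hid : c - e * c * e = c * (1 - e) + ((1 - e) * c) * e := by noncomm_ring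
  have huc : ‖(1 - e) * c‖ = ‖c * (1 - e)‖ := by
    rw [← norm_star ((1 - e) * c), star_mul, husa.star_eq, hcsa.star_eq]
  calc ‖c - e * c * e‖ = ‖c * (1 - e) + ((1 - e) * c) * e‖ := by rw [hid]
    _ ≤ ‖c * (1 - e)‖ + ‖(1 - e) * c‖ * ‖e‖ := (norm_add_le _ _).trans
        (add_le_add le_rfl (norm_mul_le _ _))
    _ ≤ ‖c * (1 - e)‖ + ‖c * (1 - e)‖ * 1 := by
        rw [huc]; exact add_le_add le_rfl (mul_le_mul_of_nonneg_left he1 (norm_nonneg _))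
    _ = 2 * ‖c * (1 - e)‖ := by ring
    _ ≤ 2 * Real.sqrt (‖s‖ * δ) := by linarith

end AUB

section LemmaA
variable {B : Type*} [NonUnitalCStarAlgebra B] [PartialOrder B] [StarOrderedRing B]

lemma conj_norm_eq_inr {P Q : B} (hP : 0 ≤ P) (hQ : 0 ≤ Q)
    (h : ∀ b : B, ‖star b * P * b‖ = ‖star b * Q * b‖) (d : Unitization ℂ B) :
    ‖star d * (P : Unitization ℂ B) * d‖ = ‖star d * (Q : Unitization ℂ B) * d‖ := by
  obtain ⟨c₁, hc₁⟩ := exists_inr_eq_conj d P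
  obtain ⟨c₂, hc₂⟩ := exists_inr_eq_conj d Q
  have hc₁0 : 0 ≤ c₁ := by
    rw [← Unitization.inr_nonneg_iff (A := B), hc₁]
    exact star_left_conjugate_nonneg (Unitization.inr_nonneg_iff.mpr hP) d
  have hc₂0 : 0 ≤ c₂ := by
    rw [← Unitization.inr_nonneg_iff (A := B), hc₂]
    exact star_left_conjugate_nonneg (Unitization.inr_nonneg_iff.mpr hQ) d
  rw [← hc₁, ← hc₂, Unitization.norm_inr, Unitization.norm_inr]
  set s : B := c₁ + c₂ with hs
  have hs0 : 0 ≤ s := add_nonneg hc₁0 hc₂0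
  have hc₁s : c₁ ≤ s := le_add_of_nonneg_right hc₂0
  have hc₂s : c₂ ≤ s := le_add_of_nonneg_left hc₁0
  -- main step: for every δ > 0, the two norms are within 4√(‖s‖δ)
  have key : ∀ δ : ℝ, 0 < δ →
      ‖c₁‖ ≤ ‖c₂‖ + 4 * Real.sqrt (‖s‖ * δ) ∧ ‖c₂‖ ≤ ‖c₁‖ + 4 * Real.sqrt (‖s‖ * δ) := by
    intro δ hδ
    set g : ℝ → ℝ := fun t => min (t / δ) 1 with hg
    have hg0 : g 0 = 0 := by simp [hg, hδ.le]
    set e : B := cfcₙ g s with he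
    have hesa : IsSelfAdjoint e := cfcₙ_predicate g s
    have hee : (e : Unitization ℂ B) = cfc g (s : Unitization ℂ B) :=
      Unitization.real_cfcₙ_eq_cfc_inr s g hg0
    -- norm bounds via approx_unit_bound in the unitization
    have bound : ∀ c : B, 0 ≤ c → c ≤ s → ‖c - e * c * e‖ ≤ 2 * Real.sqrt (‖s‖ * δ) := by
      intro c hc hcs
      have h1 : ‖(c : Unitization ℂ B) - (e : Unitization ℂ B) * c * e‖
          ≤ 2 * Real.sqrt (‖(s : Unitization ℂ B)‖ * δ) := by
        rw [hee]
        exact approx_unit_bound (Unitization.inr_nonneg_iff.mpr hc)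
          ((Unitization.inr_le_iff c s (.of_nonneg hc) (.of_nonneg hs0)).mpr hcs) hδ
      rw [Unitization.norm_inr] at h1
      rw [← Unitization.norm_inr (𝕜 := ℂ) (c - e * c * e), Unitization.inr_sub ℂ,
        Unitization.inr_mul ℂ, Unitization.inr_mul ℂ]
      exact h1
    -- the compressed norms are equal
    have hmid : ‖e * c₁ * e‖ = ‖e * c₂ * e‖ := by
      obtain ⟨b', hb'⟩ := exists_inr_eq_mul_inr d e
      have h1 : ∀ (R : B) (cR : B), ((cR : Unitization ℂ B) = star d * (R : Unitization ℂ B) * d) →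
          (((star b' * R * b' : B) : Unitization ℂ B) = ((e * cR * e : B) : Unitization ℂ B)) := by
        intro R cR hcR
        rw [Unitization.inr_mul ℂ, Unitization.inr_mul ℂ, Unitization.inr_mul ℂ,
          Unitization.inr_mul ℂ, Unitization.inr_star, hb', hcR]
        have hbstar : star ((d : Unitization ℂ B) * (e : Unitization ℂ B))
            = (e : Unitization ℂ B) * star d := by
          rw [star_mul, ← Unitization.inr_star, hesa.star_eq]
        rw [hbstar]
        noncomm_ring
      have e₁ := Unitization.inr_injective (R := ℂ) (h1 P c₁ hc₁)
      have e₂ := Unitization.inr_injective (R := ℂ) (h1 Q c₂ hc₂)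
      rw [← e₁, ← e₂]
      exact h b'
    have b₁ := bound c₁ hc₁0 hc₁s
    have b₂ := bound c₂ hc₂0 hc₂s
    have t₁ : ‖c₁‖ ≤ ‖e * c₁ * e‖ + 2 * Real.sqrt (‖s‖ * δ) := by
      have := norm_sub_norm_le c₁ (e * c₁ * e)
      linarith [this.trans b₁]
    have t₂ : ‖e * c₂ * e‖ ≤ ‖c₂‖ + 2 * Real.sqrt (‖s‖ * δ) := by
      have := norm_sub_norm_le (e * c₂ * e) c₂
      rw [norm_sub_rev] at this
      linarith [this.trans b₂]
    have t₃ : ‖c₂‖ ≤ ‖e * c₂ * e‖ + 2 * Real.sqrt (‖s‖ * δ) := by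
      have := norm_sub_norm_le c₂ (e * c₂ * e)
      linarith [this.trans b₂]
    have t₄ : ‖e * c₁ * e‖ ≤ ‖c₁‖ + 2 * Real.sqrt (‖s‖ * δ) := by
      have := norm_sub_norm_le (e * c₁ * e) c₁
      rw [norm_sub_rev] at this
      linarith [this.trans b₁]
    constructor
    · calc ‖c₁‖ ≤ ‖e * c₁ * e‖ + 2 * Real.sqrt (‖s‖ * δ) := t₁
        _ = ‖e * c₂ * e‖ + 2 * Real.sqrt (‖s‖ * δ) := by rw [hmid]
        _ ≤ ‖c₂‖ + 4 * Real.sqrt (‖s‖ * δ) := by linarith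
    · calc ‖c₂‖ ≤ ‖e * c₂ * e‖ + 2 * Real.sqrt (‖s‖ * δ) := t₃
        _ = ‖e * c₁ * e‖ + 2 * Real.sqrt (‖s‖ * δ) := by rw [← hmid]
        _ ≤ ‖c₁‖ + 4 * Real.sqrt (‖s‖ * δ) := by linarith
  -- conclude via ε-argument
  have small : ∀ ε : ℝ, 0 < ε → 4 * Real.sqrt (‖s‖ * (ε ^ 2 / (16 * (‖s‖ + 1)))) ≤ ε := by
    intro ε hε
    have hn : (0:ℝ) < ‖s‖ + 1 := by positivity
    have h1 : ‖s‖ * (ε ^ 2 / (16 * (‖s‖ + 1))) ≤ (ε / 4) ^ 2 := by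
      rw [div_pow]
      rw [mul_div_assoc']
      rw [div_le_div_iff₀ (by positivity) (by norm_num)]
      ring_nf
      nlinarith [norm_nonneg s, sq_nonneg ε]
    calc 4 * Real.sqrt (‖s‖ * (ε ^ 2 / (16 * (‖s‖ + 1)))) ≤ 4 * Real.sqrt ((ε / 4) ^ 2) := by
          gcongr
      _ = 4 * (ε / 4) := by rw [Real.sqrt_sq (by positivity)]
      _ = ε := by ring
  refine le_antisymm ?_ ?_ <;> refine le_of_forall_pos_le_add fun ε hε => ?_
  · have := (key (ε ^ 2 / (16 * (‖s‖ + 1))) (by positivity)).1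
    linarith [small ε hε]
  · have := (key (ε ^ 2 / (16 * (‖s‖ + 1))) (by positivity)).2
    linarith [small ε hε]
end LemmaA


section LemmaB
variable {C : Type*} [CStarAlgebra C] [PartialOrder C] [StarOrderedRing C]


lemma norm_sqrt_mul_sq {X : C} (hX : 0 ≤ X) {d : C} (hd : IsSelfAdjoint d) :
    ‖CFC.sqrt X * d‖ ^ 2 = ‖star d * X * d‖ := by
  rw [sq, ← CStarRing.norm_star_mul_self, star_mul,
    (IsSelfAdjoint.of_nonneg (CFC.sqrt_nonneg (a := X))).star_eq, hd.star_eq]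
  congr 1
  calc d * CFC.sqrt X * (CFC.sqrt X * d) = d * (CFC.sqrt X * CFC.sqrt X) * d := by noncomm_ring
    _ = d * X * d := by rw [CFC.sqrt_mul_sqrt_self X hX]

lemma algebraMap_real_nonneg {ε : ℝ} (hε : 0 ≤ ε) : (0:C) ≤ algebraMap ℝ C ε := by
  have h := star_mul_self_nonneg (algebraMap ℝ C (Real.sqrt ε))
  rwa [IsSelfAdjoint.algebraMap C (isSelfAdjoint_iff.mpr rfl) |>.star_eq, ← map_mul,
    Real.mul_self_sqrt hε] at h

lemma le_of_conj_norm_le {P Q : C} (hP : 0 ≤ P) (hQ : 0 ≤ Q)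
    (h : ∀ d : C, ‖star d * P * d‖ = ‖star d * Q * d‖) : P ≤ Q := by
  have main : ∀ ε : ℝ, 0 < ε → P ≤ Q + algebraMap ℝ C ε := by
    intro ε hε
    set b : C := Q + algebraMap ℝ C ε with hb
    have hb0 : 0 ≤ b := add_nonneg hQ (algebraMap_real_nonneg hε.le)
    have hbu : IsUnit b := by
      refine CStarAlgebra.isUnit_of_le (algebraMap ℝ C ε) ?_
        (IsStrictlyPositive.iff_of_unital.mpr ⟨algebraMap_real_nonneg hε.le,
          IsUnit.map (algebraMap ℝ C) (isUnit_iff_ne_zero.mpr hε.ne')⟩)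
      exact le_add_of_nonneg_left hQ
    have hQb : Q ≤ b := le_add_of_nonneg_right (algebraMap_real_nonneg hε.le)
    set d : C := b ^ (-(1/2) : ℝ) with hd
    have hdsa : IsSelfAdjoint d := .of_nonneg CFC.rpow_nonneg
    have h1 : ‖CFC.sqrt Q * d‖ ≤ 1 := (le_iff_norm_sqrt_mul_rpow Q b hQ (IsStrictlyPositive.iff_of_unital.mpr ⟨hb0, hbu⟩)).mp hQb
    have h2 : ‖CFC.sqrt P * d‖ = ‖CFC.sqrt Q * d‖ := by
      have e1 := norm_sqrt_mul_sq hP hdsa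
      have e2 := norm_sqrt_mul_sq hQ hdsa
      have := h d
      nlinarith [norm_nonneg (CFC.sqrt P * d), norm_nonneg (CFC.sqrt Q * d)]
    exact (le_iff_norm_sqrt_mul_rpow P b hP (IsStrictlyPositive.iff_of_unital.mpr ⟨hb0, hbu⟩)).mpr (h2 ▸ h1)
  have hPQsa : IsSelfAdjoint (P - Q) := (IsSelfAdjoint.of_nonneg hP).sub (.of_nonneg hQ)
  have hspec : ∀ x ∈ spectrum ℝ (P - Q), x ≤ 0 := by
    intro x hx
    by_contra hc
    push_neg at hc
    have h3 := (le_algebraMap_iff_spectrum_le hPQsa).mp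
      (sub_le_iff_le_add.mpr ((main (x/2) (by linarith)).trans_eq (by rw [add_comm]))) x hx
    linarith
  have : P - Q ≤ algebraMap ℝ C 0 := (le_algebraMap_iff_spectrum_le hPQsa).mpr hspec
  rw [map_zero, sub_nonpos] at this
  exact this

lemma eq_of_conj_norm_eq {P Q : C} (hP : 0 ≤ P) (hQ : 0 ≤ Q)
    (h : ∀ d : C, ‖star d * P * d‖ = ‖star d * Q * d‖) : P = Q :=
  le_antisymm (le_of_conj_norm_le hP hQ h) (le_of_conj_norm_le hQ hP fun d => (h d).symm)

end LemmaB

section KeyLemma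
variable {B : Type*} [NonUnitalCStarAlgebra B] [PartialOrder B] [StarOrderedRing B]

lemma eq_of_conj_norm_eq' {P Q : B} (hP : 0 ≤ P) (hQ : 0 ≤ Q)
    (h : ∀ b : B, ‖star b * P * b‖ = ‖star b * Q * b‖) : P = Q :=
  Unitization.inr_injective (R := ℂ) <| eq_of_conj_norm_eq (Unitization.inr_nonneg_iff.mpr hP)
    (Unitization.inr_nonneg_iff.mpr hQ) (conj_norm_eq_inr hP hQ h)

end KeyLemma

end ModuleMapIsometryAux

open ModuleMapIsometryAux in
/-- If `T` is a surjective linear isometry between Hilbert C*-modules which is a module map with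
respect to a *-isomorphism `φ`, then `T` preserves the inner products with respect to `φ`. -/
theorem module_map_isometry_preserves_inner
    {A B E F : Type*}
    [NonUnitalCStarAlgebra A] [PartialOrder A] [StarOrderedRing A]
    [NonUnitalCStarAlgebra B] [PartialOrder B] [StarOrderedRing B]
    [AddCommGroup E] [Module ℂ E] [SMul Aᵐᵒᵖ E] [Norm E] [RightCStarModule A E]
    [AddCommGroup F] [Module ℂ F] [SMul Bᵐᵒᵖ F] [Norm F] [RightCStarModule B F]
    (T : E →ₗ[ℂ] F) (hsurj : Function.Surjective T) (hiso : ∀ x : E, ‖T x‖ = ‖x‖)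
    (φ : A ≃⋆ₐ[ℂ] B)
    (hmod : ∀ (x : E) (a : A), T (x <• a) = T x <• φ a) :
    ∀ x y : E, (inner B (T x) (T y) : B) = φ (inner A x y) := by
  -- the diagonal case
  have diag : ∀ x : E, (inner B (T x) (T x) : B) = φ (inner A x x) := by
    intro x
    have hP : (0:B) ≤ inner B (T x) (T x) := RightCStarModule.inner_self_nonneg
    have hQ : (0:B) ≤ φ (inner A x x) := by
      have h0 : (0:A) ≤ inner A x x := RightCStarModule.inner_self_nonneg
      have h1 : (inner A x x : A) = star (CFC.sqrt (inner A x x : A)) * CFC.sqrt (inner A x x : A) := by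
        rw [(IsSelfAdjoint.of_nonneg (CFC.sqrt_nonneg (a := (inner A x x : A)))).star_eq,
          CFC.sqrt_mul_sqrt_self _ h0]
      rw [h1, map_mul, map_star]
      exact star_mul_self_nonneg _
    refine eq_of_conj_norm_eq' hP hQ fun b => ?_
    obtain ⟨a, rfl⟩ := φ.surjective b
    have e1 : star (φ a) * (inner B (T x) (T x) : B) * φ a
        = inner B (T (x <• a)) (T (x <• a)) := by
      rw [hmod, RightCStarModule.inner_op_smul_left_s4, RightCStarModule.inner_op_smul_right, mul_assoc]
    have e2 : star a * (inner A x x : A) * a = inner A (x <• a) (x <• a) := by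
      rw [RightCStarModule.inner_op_smul_left_s4, RightCStarModule.inner_op_smul_right, mul_assoc]
    calc ‖star (φ a) * (inner B (T x) (T x) : B) * φ a‖
        = ‖(inner B (T (x <• a)) (T (x <• a)) : B)‖ := by rw [e1]
      _ = ‖T (x <• a)‖ ^ 2 := RightCStarModule.norm_sq_eq.symm
      _ = ‖x <• a‖ ^ 2 := by rw [hiso]
      _ = ‖(inner A (x <• a) (x <• a) : A)‖ := RightCStarModule.norm_sq_eq
      _ = ‖star a * (inner A x x : A) * a‖ := by rw [e2]
      _ = ‖φ (star a * (inner A x x : A) * a)‖ :=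
          (NonUnitalStarAlgHom.norm_map φ φ.injective _).symm
      _ = ‖star (φ a) * φ (inner A x x) * φ a‖ := by rw [map_mul, map_mul, map_star]
  -- polarization
  intro x y
  set D : E → E → B := fun z w => (inner B (T z) (T w) : B) - φ (inner A z w) with hD
  have hdiag : ∀ z : E, D z z = 0 := fun z => sub_eq_zero.mpr (diag z)
  have expand : ∀ z w : E, D (z + w) (z + w) = D z z + D z w + D w z + D w w := by
    intro z w
    simp only [hD, map_add, RightCStarModule.inner_add_left, RightCStarModule.inner_add_right]
    abel
  have h1 : D x y + D y x = 0 := by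
    have := expand x y
    rw [hdiag, hdiag, hdiag] at this
    linear_combination (norm := abel) -this
  have h2 : D x y - D y x = 0 := by
    have e := expand x (Complex.I • y)
    rw [hdiag, hdiag, hdiag] at e
    have ex : D x (Complex.I • y) = Complex.I • D x y := by
      simp only [hD, map_smul, RightCStarModule.inner_smul_right_complex, smul_sub]
    have ey : D (Complex.I • y) x = -(Complex.I • D y x) := by
      simp only [hD, map_smul, RightCStarModule.inner_smul_left_complex, Complex.star_def,
        Complex.conj_I, neg_smul, map_neg]
      module
    rw [ex, ey] at e
    have e2 : Complex.I • (D x y - D y x) = Complex.I • (0 : B) := by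
      rw [smul_zero, smul_sub]
      linear_combination (norm := module) -e
    exact smul_right_injective B Complex.I_ne_zero e2
  have : D x y = 0 := by
    have h3 : D x y + D x y = 0 := by linear_combination (norm := abel) h1 + h2
    have h4 : (2:ℂ) • D x y = (2:ℂ) • (0 : B) := by rw [smul_zero, two_smul]; exact h3
    exact smul_right_injective B (two_ne_zero (α := ℂ)) h4
  exact sub_eq_zero.mp this
end

section
/- Let n ≥ 2. The transpose map T : H_c^n → H_r^n, T(A) = Aᵗ, is a surjective linear isometry and a module map with respect to φ : ℂ → M_n(ℂ), φ(α) = αI (i.e., T(Aα) = T(A)φ(α)), but T does not preserve inner products with respect to φ: there exist A, B ∈ H_c^n with ⟨TA, TB⟩ ≠ φ(⟨A, B⟩). -/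
set_option maxHeartbeats 1000000
open Matrix
open scoped Matrix.Norms.L2Operator

/-- For `n ≥ 2`, the transpose map `T : H_c^n → H_r^n` is a surjective linear isometry and a
module map with respect to `φ : ℂ → M_n(ℂ)`, `φ(α) = α I`, but `T` does not preserve the inner
products with respect to `φ`: there are `A, B ∈ H_c^n` with `⟨T A, T B⟩ ≠ φ(⟨A, B⟩)`.
Here the inner product on `H_c^n` is identified with the `(0,0)` entry of `Aᴴ * B`. -/
theorem transpose_column_to_row_module_map_not_inner_preserving
    (n : ℕ) (hn : 2 ≤ n) :
    -- `T` maps the column space into the row space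
    (∀ A : Matrix (Fin n) (Fin n) ℂ, (∀ i j, j ≠ (⟨0, by omega⟩ : Fin n) → A i j = 0) →
      ∀ i j, i ≠ (⟨0, by omega⟩ : Fin n) → Aᵀ i j = 0) ∧
    -- `T` is linear
    (∀ (c : ℂ) (A B : Matrix (Fin n) (Fin n) ℂ), (c • A + B)ᵀ = c • Aᵀ + Bᵀ) ∧
    -- `T` is surjective onto the row space
    (∀ C : Matrix (Fin n) (Fin n) ℂ, (∀ i j, i ≠ (⟨0, by omega⟩ : Fin n) → C i j = 0) →
      ∃ A : Matrix (Fin n) (Fin n) ℂ,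
        (∀ i j, j ≠ (⟨0, by omega⟩ : Fin n) → A i j = 0) ∧ Aᵀ = C) ∧
    -- `T` is isometric for the Hilbert C*-module norms
    (∀ A : Matrix (Fin n) (Fin n) ℂ, (∀ i j, j ≠ (⟨0, by omega⟩ : Fin n) → A i j = 0) →
      Real.sqrt ‖Aᵀᴴ * Aᵀ‖ =
        Real.sqrt ‖(Aᴴ * A) (⟨0, by omega⟩ : Fin n) (⟨0, by omega⟩ : Fin n)‖) ∧
    -- `T` is a module map with respect to `φ(α) = α I`
    (∀ (α : ℂ) (A : Matrix (Fin n) (Fin n) ℂ),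
      (α • A)ᵀ = Aᵀ * (α • (1 : Matrix (Fin n) (Fin n) ℂ))) ∧
    -- but `T` does not preserve the inner products with respect to `φ`
    (∃ A B : Matrix (Fin n) (Fin n) ℂ,
      (∀ i j, j ≠ (⟨0, by omega⟩ : Fin n) → A i j = 0) ∧
      (∀ i j, j ≠ (⟨0, by omega⟩ : Fin n) → B i j = 0) ∧
      Aᵀᴴ * Bᵀ ≠
        ((Aᴴ * B) (⟨0, by omega⟩ : Fin n) (⟨0, by omega⟩ : Fin n)) •
          (1 : Matrix (Fin n) (Fin n) ℂ)) := by
  have h2 : 0 < n := by omega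
  set e0 : Fin n := ⟨0, by omega⟩ with he0
  refine ⟨?_, ?_, ?_, ?_, ?_, ?_⟩
  · intro A hA i j hi
    exact hA j i hi
  · intro c A B
    simp [Matrix.transpose_add, Matrix.transpose_smul]
  · intro C hC
    exact ⟨Cᵀ, fun i j hj => hC j i hj, Matrix.transpose_transpose C⟩
  · intro A hA
    set M : Matrix (Fin n) (Fin n) ℂ := Aᵀᴴ * Aᵀ with hM
    set z : ℂ := (Aᴴ * A) e0 e0 with hz
    have hMentry : ∀ i j, M i j = (starRingEnd ℂ) (A i e0) * A j e0 := by
      intro i j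
      rw [hM, Matrix.mul_apply]
      rw [Finset.sum_eq_single e0]
      · simp [Matrix.conjTranspose_apply, Matrix.transpose_apply]
      · intro k _ hk
        simp [Matrix.conjTranspose_apply, Matrix.transpose_apply, hA i k hk]
      · simp
    have hzval : z = ∑ k, (starRingEnd ℂ) (A k e0) * A k e0 := by
      rw [hz, Matrix.mul_apply]
      simp [Matrix.conjTranspose_apply]
    have hMsa : Mᴴ = M := by
      ext i j
      simp only [Matrix.conjTranspose_apply, hMentry]
      simp [mul_comm]
    have hMM : M * M = z • M := by
      ext i j
      rw [Matrix.mul_apply]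
      simp only [hMentry, Matrix.smul_apply, smul_eq_mul, hzval, Finset.sum_mul]
      congr 1
      ext k
      ring
    have key : ‖M‖ = ‖z‖ := by
      have h1 : ‖Mᴴ * M‖ = ‖M‖ * ‖M‖ := Matrix.l2_opNorm_conjTranspose_mul_self M
      rw [hMsa, hMM, norm_smul] at h1
      by_cases hM0 : M = 0
      · have hz0 : z = 0 := by
          rw [hzval]
          refine Finset.sum_eq_zero fun k _ => ?_
          have := congrFun (congrFun hM0 k) k
          rw [hMentry] at this
          simpa using this
        simp [hM0, hz0]
      · have hMn : ‖M‖ ≠ 0 := by simpa using hM0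
        exact (mul_right_cancel₀ hMn h1).symm
    rw [key]
  · intro α A
    simp [Matrix.mul_smul, Matrix.transpose_smul]
  · set e1 : Fin n := ⟨1, by omega⟩ with he1
    refine ⟨Matrix.single e0 e0 1, Matrix.single e1 e0 1, ?_, ?_, ?_⟩
    · intro i j hj
      simp [Matrix.single, Ne.symm hj]
    · intro i j hj
      simp [Matrix.single, Ne.symm hj]
    · intro h
      have hne : e0 ≠ e1 := by
        simp only [he0, he1, Ne, Fin.mk.injEq]
        omega
      have := congrFun (congrFun h e0) e1
      rw [Matrix.mul_apply] at this
      simp only [Matrix.smul_apply, Matrix.one_apply, hne, if_neg hne, smul_eq_mul,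
        mul_zero] at this
      rw [Finset.sum_eq_single e0] at this
      · simp [Matrix.conjTranspose_apply, Matrix.transpose_apply,
          Matrix.single] at this
      · intro k _ hk
        simp [Matrix.conjTranspose_apply, Matrix.transpose_apply,
          Matrix.single, Ne.symm hk]
      · simp
end

section
/- Let X, Y be locally compact Hausdorff spaces, H₁, H₂ Hilbert spaces, σ : Y → X a homeomorphism, and h : Y → B(H₁, H₂) a map such that h(y) is unitary for each y and h is continuous in the strong operator topology. Then the weighted composition operator T : C₀(X, H₁) → C₀(Y, H₂), (Tf)(y) = h(y)(f(σ(y))), is a well-defined surjective linear isometry, and ⟨Tf, Tg⟩ = ⟨f, g⟩ ∘ σ for all f, g ∈ C₀(X, H₁). -/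
open scoped ZeroAtInfty

section Aux

variable {Y : Type*} [TopologicalSpace Y]
  {H₁ H₂ : Type*} [NormedAddCommGroup H₁] [NormedAddCommGroup H₂]
  [NormedSpace ℂ H₁] [NormedSpace ℂ H₂]

lemma sot_eval_cont (e : Y → (H₁ ≃ₗᵢ[ℂ] H₂))
    (hSOT : ∀ v : H₁, Continuous fun y => e y v) {g : Y → H₁} (hg : Continuous g) :
    Continuous fun y => e y (g y) := by
  rw [continuous_iff_continuousAt]
  intro y₀
  rw [ContinuousAt, tendsto_iff_norm_sub_tendsto_zero]
  have hb : ∀ y, ‖e y (g y) - e y₀ (g y₀)‖ ≤ ‖g y - g y₀‖ + ‖e y (g y₀) - e y₀ (g y₀)‖ := by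
    intro y
    calc ‖e y (g y) - e y₀ (g y₀)‖
        = ‖(e y (g y) - e y (g y₀)) + (e y (g y₀) - e y₀ (g y₀))‖ := by abel_nf
      _ ≤ ‖e y (g y) - e y (g y₀)‖ + ‖e y (g y₀) - e y₀ (g y₀)‖ := norm_add_le _ _
      _ = ‖g y - g y₀‖ + ‖e y (g y₀) - e y₀ (g y₀)‖ := by
          rw [← map_sub, (e y).norm_map]
  have h1 : Filter.Tendsto (fun y => ‖g y - g y₀‖ + ‖e y (g y₀) - e y₀ (g y₀)‖)
      (nhds y₀) (nhds 0) := by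
    have t1 : Filter.Tendsto (fun y => ‖g y - g y₀‖) (nhds y₀) (nhds 0) := by
      have := (((hg.tendsto y₀).sub (tendsto_const_nhds (x := g y₀))).norm)
      simpa using this
    have t2 : Filter.Tendsto (fun y => ‖e y (g y₀) - e y₀ (g y₀)‖) (nhds y₀) (nhds 0) := by
      have := ((((hSOT (g y₀)).tendsto y₀).sub (tendsto_const_nhds (x := e y₀ (g y₀)))).norm)
      simpa using this
    simpa using t1.add t2
  exact squeeze_zero (fun y => norm_nonneg _) hb h1

lemma sot_symm_cont (e : Y → (H₁ ≃ₗᵢ[ℂ] H₂))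
    (hSOT : ∀ v : H₁, Continuous fun y => e y v) (v : H₂) :
    Continuous fun y => (e y).symm v := by
  rw [continuous_iff_continuousAt]
  intro y₀
  rw [ContinuousAt, tendsto_iff_norm_sub_tendsto_zero]
  have key : ∀ y, ‖(e y).symm v - (e y₀).symm v‖ = ‖v - e y ((e y₀).symm v)‖ := by
    intro y
    rw [← (e y).norm_map, map_sub]
    simp
  have : Filter.Tendsto (fun y => ‖v - e y ((e y₀).symm v)‖) (nhds y₀) (nhds 0) := by
    have := (((tendsto_const_nhds (x := v)).sub ((hSOT ((e y₀).symm v)).tendsto y₀)).norm)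
    simpa using this
  simpa only [key] using this

end Aux

/-- The weighted composition operator `(Tf)(y) = h(y)(f(σ(y)))`, where `σ` is a homeomorphism
and `h` is an SOT-continuous family of unitaries, is a well-defined surjective linear isometry
`C₀(X, H₁) → C₀(Y, H₂)` with `⟨Tf, Tg⟩ = ⟨f, g⟩ ∘ σ`. -/
theorem weighted_composition_operator_isometry
    {X Y : Type*} [TopologicalSpace X] [LocallyCompactSpace X] [T2Space X]
    [TopologicalSpace Y] [LocallyCompactSpace Y] [T2Space Y]
    {H₁ H₂ : Type*} [NormedAddCommGroup H₁] [InnerProductSpace ℂ H₁]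
    [NormedAddCommGroup H₂] [InnerProductSpace ℂ H₂]
    (σ : Y ≃ₜ X) (h : Y → (H₁ →L[ℂ] H₂))
    (hunitary_iso : ∀ (y : Y) (v : H₁), ‖h y v‖ = ‖v‖)
    (hunitary_surj : ∀ y : Y, Function.Surjective (h y))
    (hSOT : ∀ v : H₁, Continuous fun y => h y v) :
    ∃ T : C₀(X, H₁) →ₗ[ℂ] C₀(Y, H₂),
      (∀ (f : C₀(X, H₁)) (y : Y), T f y = h y (f (σ y))) ∧
      (∀ f : C₀(X, H₁), ‖T f‖ = ‖f‖) ∧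
      Function.Surjective T ∧
      (∀ (f g : C₀(X, H₁)) (y : Y),
        (inner ℂ (T f y) (T g y) : ℂ) = inner ℂ (f (σ y)) (g (σ y))) := by
  -- package h as a family of linear isometry equivalences
  set e : Y → (H₁ ≃ₗᵢ[ℂ] H₂) := fun y =>
    LinearIsometryEquiv.ofSurjective ⟨(h y).toLinearMap, hunitary_iso y⟩ (hunitary_surj y)
    with he
  have he_apply : ∀ y v, e y v = h y v := fun y v => rfl
  have heSOT : ∀ v : H₁, Continuous fun y => e y v := by
    intro v; simpa only [he_apply] using hSOT v
  -- Tf as an element of C₀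
  have Tcont : ∀ f : C₀(X, H₁), Continuous fun y => e y (f (σ y)) := fun f =>
    sot_eval_cont e heSOT (f.continuous.comp σ.continuous)
  have Tzero : ∀ f : C₀(X, H₁),
      Filter.Tendsto (fun y => e y (f (σ y))) (Filter.cocompact Y) (nhds 0) := by
    intro f
    rw [tendsto_zero_iff_norm_tendsto_zero]
    have : Filter.Tendsto (fun y => ‖f (σ y)‖) (Filter.cocompact Y) (nhds 0) := by
      have h1 : Filter.Tendsto (fun x : X => ‖f x‖) (Filter.cocompact X) (nhds 0) := by
        rw [← tendsto_zero_iff_norm_tendsto_zero]; exact f.zero_at_infty'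
      have h2 : Filter.Tendsto σ (Filter.cocompact Y) (Filter.cocompact X) := by
        rw [← σ.map_cocompact]; exact Filter.tendsto_map
      exact h1.comp h2
    simpa only [(e _).norm_map] using this
  set Tf : C₀(X, H₁) → C₀(Y, H₂) := fun f =>
    ⟨⟨fun y => e y (f (σ y)), Tcont f⟩, Tzero f⟩ with hTf
  have Tf_apply : ∀ f y, Tf f y = e y (f (σ y)) := fun f y => rfl
  refine ⟨{ toFun := Tf, map_add' := ?_, map_smul' := ?_ }, ?_, ?_, ?_, ?_⟩
  · intro f g; ext y; simp [Tf_apply, map_add]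
  · intro c f; ext y; simp [Tf_apply, map_smul]
  · intro f y; exact he_apply y _
  · intro f
    refine le_antisymm ?_ ?_
    · rw [← ZeroAtInftyContinuousMap.norm_toBCF_eq_norm]
      refine ((Tf f).toBCF.norm_le (norm_nonneg f)).2 fun y => ?_
      show ‖Tf f y‖ ≤ ‖f‖
      rw [Tf_apply, (e y).norm_map, ← ZeroAtInftyContinuousMap.norm_toBCF_eq_norm]
      exact f.toBCF.norm_coe_le_norm (σ y)
    · rw [← ZeroAtInftyContinuousMap.norm_toBCF_eq_norm (f := f)]
      refine (f.toBCF.norm_le (norm_nonneg (Tf f))).2 fun x => ?_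
      show ‖f x‖ ≤ ‖Tf f‖
      have hx : ‖f x‖ = ‖Tf f (σ.symm x)‖ := by
        rw [Tf_apply, (e _).norm_map, σ.apply_symm_apply]
      rw [hx, ← ZeroAtInftyContinuousMap.norm_toBCF_eq_norm]
      exact (Tf f).toBCF.norm_coe_le_norm (σ.symm x)
  · intro g
    have gcont : Continuous fun x : X => (e (σ.symm x)).symm (g (σ.symm x)) := by
      have := sot_eval_cont (fun y => (e y).symm)
        (fun v => sot_symm_cont e heSOT v) (g.continuous)
      exact this.comp σ.symm.continuous
    have gzero : Filter.Tendsto (fun x : X => (e (σ.symm x)).symm (g (σ.symm x)))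
        (Filter.cocompact X) (nhds 0) := by
      rw [tendsto_zero_iff_norm_tendsto_zero]
      have h1 : Filter.Tendsto (fun y : Y => ‖g y‖) (Filter.cocompact Y) (nhds 0) := by
        rw [← tendsto_zero_iff_norm_tendsto_zero]; exact g.zero_at_infty'
      have h2 : Filter.Tendsto σ.symm (Filter.cocompact X) (Filter.cocompact Y) := by
        rw [← σ.symm.map_cocompact]; exact Filter.tendsto_map
      have := h1.comp h2
      simpa only [Function.comp_def, (e _).symm.norm_map] using this
    refine ⟨⟨⟨fun x => (e (σ.symm x)).symm (g (σ.symm x)), gcont⟩, gzero⟩, ?_⟩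
    ext y
    show e y ((e (σ.symm (σ y))).symm (g (σ.symm (σ y)))) = g y
    rw [σ.symm_apply_apply]
    simp
  · intro f g y
    show (inner ℂ (e y (f (σ y))) (e y (g (σ y))) : ℂ) = _
    exact (e y).inner_map_map _ _
end

section
/- Let T : E → F be a bijective linear map between Hilbert C*-modules over A and B. Suppose T is a triple homomorphism, i.e., T(z⟨x,y⟩) = Tz⟨Tx,Ty⟩ for all x, y, z ∈ E. Then for x_i, y_i ∈ E and scalars α_i (i = 1,…,n), Σᵢ αᵢ⟨xᵢ, yᵢ⟩ acts as zero on E (i.e., z·Σᵢ αᵢ⟨xᵢ,yᵢ⟩ = 0 for all z ∈ E) if and only if Σᵢ αᵢ⟨Txᵢ, Tyᵢ⟩ acts as zero on F. -/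
open scoped RightActions ComplexOrder

private lemma rcsm_inner_sub_right {A E : Type*}
    [NonUnitalCStarAlgebra A] [PartialOrder A] [StarOrderedRing A]
    [AddCommGroup E] [Module ℂ E] [SMul Aᵐᵒᵖ E] [Norm E] [RightCStarModule A E]
    (x y z : E) : (inner A x (y - z) : A) = inner A x y - inner A x z := by
  let f : E →+ A := AddMonoidHom.mk' (fun w => inner A x w)
    (fun _ _ => RightCStarModule.inner_add_right)
  exact map_sub f y z

private lemma rcsm_inner_sum_right {A E : Type*}
    [NonUnitalCStarAlgebra A] [PartialOrder A] [StarOrderedRing A]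
    [AddCommGroup E] [Module ℂ E] [SMul Aᵐᵒᵖ E] [Norm E] [RightCStarModule A E]
    {n : ℕ} (x : E) (g : Fin n → E) :
    (inner A x (∑ i, g i) : A) = ∑ i, (inner A x (g i) : A) := by
  let f : E →+ A := AddMonoidHom.mk' (fun w => inner A x w)
    (fun _ _ => RightCStarModule.inner_add_right)
  exact map_sum f g Finset.univ

private lemma cstar_ext {A E : Type*}
    [NonUnitalCStarAlgebra A] [PartialOrder A] [StarOrderedRing A]
    [AddCommGroup E] [Module ℂ E] [SMul Aᵐᵒᵖ E] [Norm E] [RightCStarModule A E]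
    {u u' : E} (h : ∀ v : E, (inner A v u : A) = inner A v u') : u = u' := by
  have h0 : (inner A (u - u') (u - u') : A) = 0 := by
    simp only [rcsm_inner_sub_right, h (u - u'), sub_self]
  exact sub_eq_zero.mp (RightCStarModule.inner_self.mp h0)

private lemma sum_smul_op_smul {A E : Type*}
    [NonUnitalCStarAlgebra A] [PartialOrder A] [StarOrderedRing A]
    [AddCommGroup E] [Module ℂ E] [SMul Aᵐᵒᵖ E] [Norm E] [RightCStarModule A E]
    {n : ℕ} (c : Fin n → A) (α : Fin n → ℂ) (z : E) :
    (∑ i, α i • (z <• c i)) = z <• (∑ i, α i • c i) := by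
  apply cstar_ext (A := A)
  intro v
  rw [RightCStarModule.inner_op_smul_right, Finset.mul_sum]
  rw [show (inner A v (∑ i, α i • (z <• c i)) : A)
      = ∑ i, (inner A v (α i • (z <• c i)) : A) from rcsm_inner_sum_right _ _]
  refine Finset.sum_congr rfl fun i _ => ?_
  rw [RightCStarModule.inner_smul_right_complex, RightCStarModule.inner_op_smul_right,
    mul_smul_comm]

/-- If `T` is a bijective linear triple homomorphism between Hilbert C*-modules, then a finite
combination `Σᵢ αᵢ⟨xᵢ, yᵢ⟩` acts as zero on `E` if and only if `Σᵢ αᵢ⟨Txᵢ, Tyᵢ⟩` acts as zero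
on `F`. -/
theorem triple_hom_kernel_correspondence
    {A B E F : Type*}
    [NonUnitalCStarAlgebra A] [PartialOrder A] [StarOrderedRing A]
    [NonUnitalCStarAlgebra B] [PartialOrder B] [StarOrderedRing B]
    [AddCommGroup E] [Module ℂ E] [SMul Aᵐᵒᵖ E] [Norm E] [RightCStarModule A E]
    [AddCommGroup F] [Module ℂ F] [SMul Bᵐᵒᵖ F] [Norm F] [RightCStarModule B F]
    (T : E →ₗ[ℂ] F) (hbij : Function.Bijective T)
    (htriple : ∀ x y z : E, T (z <• (inner A x y : A)) = T z <• (inner B (T x) (T y) : B))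
    (n : ℕ) (x y : Fin n → E) (α : Fin n → ℂ) :
    (∀ z : E, z <• (∑ i, α i • (inner A (x i) (y i) : A)) = 0) ↔
    (∀ w : F, w <• (∑ i, α i • (inner B (T (x i)) (T (y i)) : B)) = 0) := by
  have key : ∀ z : E,
      T (z <• (∑ i, α i • (inner A (x i) (y i) : A)))
        = T z <• (∑ i, α i • (inner B (T (x i)) (T (y i)) : B)) := by
    intro z
    rw [← sum_smul_op_smul, map_sum, ← sum_smul_op_smul]
    refine Finset.sum_congr rfl fun i _ => ?_
    rw [map_smul, htriple]
  constructor
  · intro h w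
    obtain ⟨z, rfl⟩ := hbij.2 w
    rw [← key, h, map_zero]
  · intro h z
    apply hbij.1
    rw [key, h, map_zero]
end

section
/- Let E, F be Hilbert C*-modules over A, B and let T : E → F be a bijective linear triple homomorphism (T(z⟨x,y⟩) = Tz⟨Tx,Ty⟩ for all x,y,z). Then the map φ on the linear span ⟨E,E⟩ defined by φ(Σᵢ αᵢ⟨xᵢ,yᵢ⟩) = Σᵢ αᵢ⟨Txᵢ,Tyᵢ⟩ is a well-defined injective *-homomorphism from span⟨E,E⟩ onto span⟨F,F⟩, T preserves inner products with respect to φ, and T(xa) = T(x)φ(a) for all x ∈ E and a ∈ span⟨E,E⟩. -/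
open scoped RightActions ComplexOrder

/-- The Hilbert C⋆-module class as it stood in Mathlib (Dec 2024): a right `A`-module structure
given by `SMul Aᵐᵒᵖ E`, with inner product `A`-linear in the second argument on the right. -/
class CStarModule' (A E : Type*) [NonUnitalSemiring A] [StarRing A] [Module ℂ A]
    [AddCommGroup E] [Module ℂ E] [PartialOrder A] [SMul Aᵐᵒᵖ E] [Norm A] [Norm E]
    extends Inner A E where
  inner_add_right {x} {y} {z} : inner x (y + z) = inner x y + inner x z
  inner_self_nonneg {x} : 0 ≤ inner x x
  inner_self {x} : inner x x = 0 ↔ x = 0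
  inner_op_smul_right {a : A} {x y : E} : inner x (y <• a) = inner x y * a
  inner_smul_right_complex {z : ℂ} {x} {y} : inner x (z • y) = z • inner x y
  star_inner x y : star (inner x y) = inner y x
  norm_eq_sqrt_norm_inner_self x : ‖x‖ = √‖inner x x‖

section Aux

variable {A E : Type*}
  [NonUnitalCStarAlgebra A] [PartialOrder A] [StarOrderedRing A]
  [AddCommGroup E] [Module ℂ E] [SMul Aᵐᵒᵖ E] [Norm E] [CStarModule' A E]

open CStarModule' Submodule

private lemma inner_zero_right' (x : E) : (inner A x (0 : E) : A) = 0 := by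
  have h := CStarModule'.inner_add_right (A := A) (x := x) (y := (0 : E)) (z := 0)
  rw [add_zero] at h
  simpa using h

private lemma inner_sub_right' (x y z : E) :
    (inner A x (y - z) : A) = inner A x y - inner A x z := by
  have h := CStarModule'.inner_add_right (A := A) (x := x) (y := y - z) (z := z)
  rw [sub_add_cancel] at h
  exact eq_sub_of_add_eq h.symm

private lemma ext_inner' {u v : E} (h : ∀ w : E, (inner A w u : A) = inner A w v) : u = v := by
  have h2 : (inner A (u - v) (u - v) : A) = 0 := by
    rw [inner_sub_right', h, sub_self]
  exact sub_eq_zero.mp (CStarModule'.inner_self.mp h2)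

private lemma opsmul_add' (z : E) (a b : A) : z <• (a + b) = z <• a + z <• b :=
  ext_inner' fun w => by
    rw [CStarModule'.inner_op_smul_right, CStarModule'.inner_add_right,
      CStarModule'.inner_op_smul_right, CStarModule'.inner_op_smul_right, mul_add]

private lemma opsmul_sub' (z : E) (a b : A) : z <• (a - b) = z <• a - z <• b :=
  ext_inner' fun w => by
    rw [CStarModule'.inner_op_smul_right, inner_sub_right',
      CStarModule'.inner_op_smul_right, CStarModule'.inner_op_smul_right, mul_sub]

private lemma opsmul_zero' (z : E) : z <• (0 : A) = 0 :=
  ext_inner' fun w => by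
    rw [CStarModule'.inner_op_smul_right, mul_zero, inner_zero_right']

private lemma opsmul_csmul' (z : E) (α : ℂ) (a : A) : z <• (α • a) = α • (z <• a) :=
  ext_inner' fun w => by
    rw [CStarModule'.inner_op_smul_right, CStarModule'.inner_smul_right_complex,
      CStarModule'.inner_op_smul_right, mul_smul_comm]

private lemma opsmul_mul' (z : E) (a b : A) : z <• (a * b) = (z <• a) <• b :=
  ext_inner' fun w => by
    rw [CStarModule'.inner_op_smul_right, CStarModule'.inner_op_smul_right,
      CStarModule'.inner_op_smul_right, mul_assoc]

private lemma star_mem' {a : A}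
    (ha : a ∈ Submodule.span ℂ {a : A | ∃ x y : E, (inner A x y : A) = a}) :
    star a ∈ Submodule.span ℂ {a : A | ∃ x y : E, (inner A x y : A) = a} := by
  induction ha using Submodule.span_induction with
  | mem a h =>
    obtain ⟨x, y, rfl⟩ := h
    exact subset_span ⟨y, x, (CStarModule'.star_inner x y).symm⟩
  | zero => simpa using Submodule.zero_mem _
  | add a b _ _ ha hb => rw [star_add]; exact Submodule.add_mem _ ha hb
  | smul α a _ ha => rw [star_smul]; exact Submodule.smul_mem _ _ ha

private lemma mul_right_mem' {a : A}
    (ha : a ∈ Submodule.span ℂ {a : A | ∃ x y : E, (inner A x y : A) = a}) (c : A) :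
    a * c ∈ Submodule.span ℂ {a : A | ∃ x y : E, (inner A x y : A) = a} := by
  induction ha using Submodule.span_induction with
  | mem a h =>
    obtain ⟨x, y, rfl⟩ := h
    exact subset_span ⟨x, y <• c, CStarModule'.inner_op_smul_right⟩
  | zero => simpa [zero_mul] using Submodule.zero_mem _
  | add a b _ _ ha hb => rw [add_mul]; exact Submodule.add_mem _ ha hb
  | smul α a _ ha => rw [smul_mul_assoc]; exact Submodule.smul_mem _ _ ha

private lemma eq_zero_of_opsmul_zero' {a : A}
    (ha : a ∈ Submodule.span ℂ {a : A | ∃ x y : E, (inner A x y : A) = a})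
    (h : ∀ z : E, z <• a = 0) : a = 0 := by
  have hmul : ∀ c ∈ Submodule.span ℂ {a : A | ∃ x y : E, (inner A x y : A) = a},
      c * a = 0 := by
    intro c hc
    induction hc using Submodule.span_induction with
    | mem c hcm =>
      obtain ⟨x, y, rfl⟩ := hcm
      rw [← CStarModule'.inner_op_smul_right, h, inner_zero_right']
    | zero => simp
    | add c d _ _ hc hd => rw [add_mul, hc, hd, add_zero]
    | smul α c _ hc => rw [smul_mul_assoc, hc, smul_zero]
  have := hmul (star a) (star_mem' ha)
  exact (CStarRing.star_mul_self_eq_zero_iff a).mp this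

end Aux

/-- A bijective linear triple homomorphism `T` between Hilbert C*-modules induces a well-defined
injective *-homomorphism `φ` from `span⟨E,E⟩` onto `span⟨F,F⟩` with `φ⟨x,y⟩ = ⟨Tx,Ty⟩`; `T`
preserves the inner products with respect to `φ` and `T(xa) = T(x)φ(a)` for `a ∈ span⟨E,E⟩`. -/
theorem triple_hom_induces_star_hom
    {A B E F : Type*}
    [NonUnitalCStarAlgebra A] [PartialOrder A] [StarOrderedRing A]
    [NonUnitalCStarAlgebra B] [PartialOrder B] [StarOrderedRing B]
    [AddCommGroup E] [Module ℂ E] [SMul Aᵐᵒᵖ E] [Norm E] [CStarModule' A E]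
    [AddCommGroup F] [Module ℂ F] [SMul Bᵐᵒᵖ F] [Norm F] [CStarModule' B F]
    (T : E →ₗ[ℂ] F) (hbij : Function.Bijective T)
    (htriple : ∀ x y z : E, T (z <• (inner A x y : A)) = T z <• (inner B (T x) (T y) : B)) :
    ∃ φ : (Submodule.span ℂ {a : A | ∃ x y : E, (inner A x y : A) = a}) →ₗ[ℂ] B,
      Function.Injective φ ∧
      -- the image of `φ` is `span⟨F,F⟩`
      LinearMap.range φ = Submodule.span ℂ {b : B | ∃ u v : F, (inner B u v : B) = b} ∧
      -- `φ` is well defined by `φ(Σ αᵢ⟨xᵢ,yᵢ⟩) = Σ αᵢ⟨Txᵢ,Tyᵢ⟩`, i.e. `T` preserves the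
      -- inner products with respect to `φ`
      (∀ x y : E,
        φ ⟨(inner A x y : A), Submodule.subset_span ⟨x, y, rfl⟩⟩ = (inner B (T x) (T y) : B)) ∧
      -- `φ` is multiplicative
      (∀ (a b : A) (ha : a ∈ Submodule.span ℂ {a : A | ∃ x y : E, (inner A x y : A) = a})
          (hb : b ∈ Submodule.span ℂ {a : A | ∃ x y : E, (inner A x y : A) = a})
          (hab : a * b ∈ Submodule.span ℂ {a : A | ∃ x y : E, (inner A x y : A) = a}),
        φ ⟨a * b, hab⟩ = φ ⟨a, ha⟩ * φ ⟨b, hb⟩) ∧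
      -- `φ` is star-preserving
      (∀ (a : A) (ha : a ∈ Submodule.span ℂ {a : A | ∃ x y : E, (inner A x y : A) = a})
          (hsa : star a ∈ Submodule.span ℂ {a : A | ∃ x y : E, (inner A x y : A) = a}),
        φ ⟨star a, hsa⟩ = star (φ ⟨a, ha⟩)) ∧
      -- `T` is a module map with respect to `φ`
      (∀ (x : E) (a : A)
          (ha : a ∈ Submodule.span ℂ {a : A | ∃ x y : E, (inner A x y : A) = a}),
        T (x <• a) = T x <• φ ⟨a, ha⟩) := by
  classical
  set sE := Submodule.span ℂ {a : A | ∃ x y : E, (inner A x y : A) = a} with hsE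
  set sF := Submodule.span ℂ {b : B | ∃ u v : F, (inner B u v : B) = b} with hsF
  -- the defining property of `φ a`
  set P : A → B → Prop := fun a b => b ∈ sF ∧ ∀ z : E, T (z <• a) = T z <• b with hP
  have uniq : ∀ a b b', P a b → P a b' → b = b' := by
    rintro a b b' ⟨hb, h⟩ ⟨hb', h'⟩
    have hsmul : ∀ w : F, w <• (b - b') = 0 := by
      intro w
      obtain ⟨z, rfl⟩ := hbij.2 w
      rw [opsmul_sub', ← h z, ← h' z, sub_self]
    have := eq_zero_of_opsmul_zero' (Submodule.sub_mem _ hb hb') hsmul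
    exact sub_eq_zero.mp this
  have exU : ∀ a : sE, ∃ b, P a b := by
    rintro ⟨a, ha⟩
    induction ha using Submodule.span_induction with
    | mem a h =>
      obtain ⟨x, y, rfl⟩ := h
      exact ⟨inner B (T x) (T y), Submodule.subset_span ⟨T x, T y, rfl⟩, fun z => htriple x y z⟩
    | zero =>
      refine ⟨0, Submodule.zero_mem _, fun z => ?_⟩
      rw [opsmul_zero', opsmul_zero', map_zero]
    | add a b _ _ iha ihb =>
      obtain ⟨ba, hba, ha'⟩ := iha
      obtain ⟨bb, hbb, hb'⟩ := ihb
      refine ⟨ba + bb, Submodule.add_mem _ hba hbb, fun z => ?_⟩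
      rw [opsmul_add', map_add, ha' z, hb' z, opsmul_add']
    | smul α a _ iha =>
      obtain ⟨ba, hba, ha'⟩ := iha
      refine ⟨α • ba, Submodule.smul_mem _ _ hba, fun z => ?_⟩
      rw [opsmul_csmul', map_smul, ha' z, opsmul_csmul']
  set f : sE → B := fun a => (exU a).choose with hfdef
  have hf : ∀ a : sE, P a (f a) := fun a => (exU a).choose_spec
  have hmem : ∀ a : sE, f a ∈ sF := fun a => (hf a).1
  have hprop : ∀ (a : sE) (z : E), T (z <• (a : A)) = T z <• f a := fun a => (hf a).2
  have hadd : ∀ a b : sE, f (a + b) = f a + f b := by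
    intro a b
    refine uniq ((a : A) + (b : A)) _ _ (hf (a + b)) ⟨Submodule.add_mem _ (hmem a) (hmem b), ?_⟩
    intro z
    rw [opsmul_add', map_add, hprop a z, hprop b z, opsmul_add']
  have hsmul : ∀ (α : ℂ) (a : sE), f (α • a) = α • f a := by
    intro α a
    refine uniq (α • (a : A)) _ _ (hf (α • a)) ⟨Submodule.smul_mem _ _ (hmem a), ?_⟩
    intro z
    rw [opsmul_csmul', map_smul, hprop a z, opsmul_csmul']
  set φ : sE →ₗ[ℂ] B :=
    { toFun := f, map_add' := hadd, map_smul' := hsmul } with hφdef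
  have hφ : ∀ a : sE, φ a = f a := fun _ => rfl
  have hgen : ∀ x y : E,
      φ ⟨(inner A x y : A), Submodule.subset_span ⟨x, y, rfl⟩⟩ = (inner B (T x) (T y) : B) := by
    intro x y
    exact uniq _ _ _ (hf _) ⟨Submodule.subset_span ⟨T x, T y, rfl⟩, fun z => htriple x y z⟩
  have hmulφ : ∀ (a b : A) (ha : a ∈ sE) (hb : b ∈ sE) (hab : a * b ∈ sE),
      φ ⟨a * b, hab⟩ = φ ⟨a, ha⟩ * φ ⟨b, hb⟩ := by
    intro a b ha hb hab
    refine uniq (a * b) _ _ (hf _)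
      ⟨mul_right_mem' (hmem ⟨a, ha⟩) _, fun z => ?_⟩
    rw [opsmul_mul', hprop ⟨b, hb⟩ (z <• a), hprop ⟨a, ha⟩ z, ← opsmul_mul']
    rfl
  refine ⟨φ, ?_, ?_, hgen, hmulφ, ?_, fun x a ha => hprop ⟨a, ha⟩ x⟩
  · -- injectivity
    intro a b hab
    have h0 : φ (a - b) = 0 := by rw [map_sub, hab, sub_self]
    have hz : ∀ z : E, z <• ((a : A) - (b : A)) = 0 := by
      intro z
      apply hbij.1
      have := hprop (a - b) z
      rw [← hφ (a - b), h0] at this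
      show T (z <• ((a - b : sE) : A)) = T 0
      rw [this, opsmul_zero', map_zero]
    have := eq_zero_of_opsmul_zero' (Submodule.sub_mem _ a.2 b.2) hz
    exact Subtype.ext (sub_eq_zero.mp this)
  · -- range
    apply le_antisymm
    · rintro b ⟨a, rfl⟩
      exact hmem a
    · rw [hsF]
      apply Submodule.span_le.mpr
      rintro b ⟨u, v, rfl⟩
      obtain ⟨x, rfl⟩ := hbij.2 u
      obtain ⟨y, rfl⟩ := hbij.2 v
      exact ⟨⟨(inner A x y : A), Submodule.subset_span ⟨x, y, rfl⟩⟩, hgen x y⟩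
  · -- star
    intro a ha
    induction ha using Submodule.span_induction with
    | mem a h =>
      intro hsa
      obtain ⟨x, y, rfl⟩ := h
      have he : (⟨star (inner A x y : A), hsa⟩ : sE)
          = ⟨(inner A y x : A), Submodule.subset_span ⟨y, x, rfl⟩⟩ :=
        Subtype.ext (CStarModule'.star_inner x y)
      rw [he, hgen, hgen, ← CStarModule'.star_inner]
    | zero =>
      intro hsa
      have he : (⟨star (0 : A), hsa⟩ : sE) = 0 := Subtype.ext (star_zero A)
      have h0 : (⟨(0 : A), Submodule.zero_mem _⟩ : sE) = 0 := rfl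
      rw [he, h0, map_zero, star_zero]
    | add a b hamem hbmem iha ihb =>
      intro hsa
      have hsa' : star a ∈ sE := star_mem' hamem
      have hsb' : star b ∈ sE := star_mem' hbmem
      have he : (⟨star (a + b), hsa⟩ : sE) = ⟨star a, hsa'⟩ + ⟨star b, hsb'⟩ :=
        Subtype.ext (star_add a b)
      have he2 : (⟨a + b, Submodule.add_mem _ hamem hbmem⟩ : sE)
          = ⟨a, hamem⟩ + ⟨b, hbmem⟩ := rfl
      rw [he, he2, map_add, map_add, iha hsa', ihb hsb', star_add]
    | smul α a hamem iha =>
      intro hsa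
      have hsa' : star a ∈ sE := star_mem' hamem
      have he : (⟨star (α • a), hsa⟩ : sE) = (starRingEnd ℂ α) • ⟨star a, hsa'⟩ :=
        Subtype.ext (star_smul α a)
      have he2 : (⟨α • a, Submodule.smul_mem _ α hamem⟩ : sE) = α • ⟨a, hamem⟩ := rfl
      rw [he, he2, map_smul, map_smul, iha hsa']
      rw [star_smul]
      rfl
end
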